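/- Let q₀,...,q_J : ℝ^{J+1} → ℝ be continuously differentiable functions with ∑_{j=0}^{J} q_j(a) = 1 for all a, satisfying Slutsky symmetry ∂q_k/∂a_l = ∂q_l/∂a_k for all k ≠ l. Then each q_l is translation invariant: q_l(a₀ + t, a₁ + t, ..., a_J + t) = q_l(a₀,...,a_J) for all t ∈ ℝ. Equivalently, writing a_j = y - p_j, the choice probabilities do not depend on income y given the prices p₁,...,p_J. -/

import Mathlib

/-- Daly–Zachary Slutsky symmetry implies absence of income effects: if C¹ choice
probabilities sum to 1 and satisfy `∂q_k/∂a_l = ∂q_l/∂a_k` for `k ≠ l`, then each `q_l`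
is invariant under simultaneous translation `a ↦ a + t·𝟙` (i.e. does not depend on income). -/
theorem stmt4 (J : ℕ) (q : Fin (J + 1) → (Fin (J + 1) → ℝ) → ℝ)
    (hq : ∀ j, ContDiff ℝ 1 (q j))
    (hsum : ∀ a, ∑ j : Fin (J + 1), q j a = 1)
    (hslutsky : ∀ k l, k ≠ l → ∀ a,
      fderiv ℝ (q k) a (Pi.single l 1) = fderiv ℝ (q l) a (Pi.single k 1)) :
    ∀ (l : Fin (J + 1)) (a : Fin (J + 1) → ℝ) (t : ℝ),
      q l (fun i => a i + t) = q l a := by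
  intro l a t
  have hdiff : ∀ j, Differentiable ℝ (q j) := fun j => (hq j).differentiable one_ne_zero
  -- key: directional derivative of q l in direction 𝟙 is zero
  have key : ∀ x, fderiv ℝ (q l) x (fun _ => (1 : ℝ)) = 0 := by
    intro x
    have hone : (fun _ => (1 : ℝ)) = ∑ k : Fin (J + 1), Pi.single k (1 : ℝ) := by
      funext i
      simp [Finset.sum_apply, Pi.single_apply]
    rw [hone, map_sum]
    have hstep : ∀ k : Fin (J + 1),
        fderiv ℝ (q l) x (Pi.single k 1) = fderiv ℝ (q k) x (Pi.single l 1) := by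
      intro k
      by_cases hk : k = l
      · subst hk; rfl
      · exact (hslutsky k l hk x).symm
    calc ∑ k : Fin (J + 1), fderiv ℝ (q l) x (Pi.single k 1)
        = ∑ k : Fin (J + 1), fderiv ℝ (q k) x (Pi.single l 1) := by
          exact Finset.sum_congr rfl fun k _ => hstep k
      _ = (∑ k : Fin (J + 1), fderiv ℝ (q k) x) (Pi.single l 1) := by
          simp [ContinuousLinearMap.sum_apply]
      _ = (fderiv ℝ (fun y => ∑ k : Fin (J + 1), q k y) x) (Pi.single l 1) := by
          rw [fderiv_fun_sum fun k _ => (hdiff k).differentiableAt]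
      _ = 0 := by
          have : (fun y : Fin (J + 1) → ℝ => ∑ k : Fin (J + 1), q k y) = fun _ => 1 := by
            funext y; exact hsum y
          rw [this, fderiv_fun_const]; simp
  -- the path t ↦ a + t • 𝟙
  set c : Fin (J + 1) → ℝ := fun _ => (1 : ℝ) with hc
  have hline : ∀ s : ℝ, HasDerivAt (fun s : ℝ => a + s • c) c s := by
    intro s
    have h1 : HasDerivAt (fun s : ℝ => s • c) ((1 : ℝ) • c) s :=
      (hasDerivAt_id s).smul_const c
    simpa using h1.const_add a
  have hg : ∀ s : ℝ, HasDerivAt (fun s : ℝ => q l (a + s • c)) 0 s := by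
    intro s
    have := ((hdiff l) (a + s • c)).hasFDerivAt.comp_hasDerivAt s (hline s)
    simpa [key, Function.comp_def] using this
  have hconst : ∀ s : ℝ, q l (a + s • c) = q l (a + (0 : ℝ) • c) := by
    intro s
    exact is_const_of_deriv_eq_zero (f := fun s : ℝ => q l (a + s • c))
      (fun x => (hg x).differentiableAt) (fun x => (hg x).deriv) s 0
  have h1 : (fun i => a i + t) = a + t • c := by
    funext i; simp [hc]
  have h2 : a + (0 : ℝ) • c = a := by simp
  rw [h1, hconst t, h2]
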